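/- arXiv:2412.03120 — 3 statements merged into one kernel-verified Lean document; each statement's English description precedes it below -/
import Mathlib

section
/- Rounding to a feasible transportation plan: let P ∈ ℝ_{≥0}^{m×n}, and let a ∈ ℝ_{≥0}^m and b ∈ ℝ_{≥0}^n be probability vectors (entries summing to 1). Then there exists P̃ ∈ ℝ_{≥0}^{m×n} with P̃1_n = a and P̃ᵀ1_m = b such that ‖P − P̃‖₁ ≤ 2(‖P1_n − a‖₁ + ‖Pᵀ1_m − b‖₁). -/
open Matrix Finset

/-- **Rounding to a feasible transportation plan** (Altschuler–Weed–Rigollet).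
Given a nonnegative matrix `P` and probability vectors `a`, `b`, there is a nonnegative
matrix `P̃` with row sums `a` and column sums `b` such that
`‖P − P̃‖₁ ≤ 2(‖P1 − a‖₁ + ‖Pᵀ1 − b‖₁)`. -/
theorem rounding_to_feasible_plan
    (m n : ℕ) (P : Matrix (Fin m) (Fin n) ℝ) (hP : ∀ i j, 0 ≤ P i j)
    (a : Fin m → ℝ) (b : Fin n → ℝ)
    (ha : ∀ i, 0 ≤ a i) (hb : ∀ j, 0 ≤ b j)
    (hasum : ∑ i, a i = 1) (hbsum : ∑ j, b j = 1) :
    ∃ Pt : Matrix (Fin m) (Fin n) ℝ,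
      (∀ i j, 0 ≤ Pt i j) ∧
      (Pt *ᵥ fun _ => 1) = a ∧
      (Ptᵀ *ᵥ fun _ => 1) = b ∧
      (∑ i, ∑ j, |P i j - Pt i j|) ≤
        2 * ((∑ i, |(P *ᵥ fun _ => 1) i - a i|) + (∑ j, |(Pᵀ *ᵥ fun _ => 1) j - b j|)) := by
  classical
  set r : Fin m → ℝ := fun i => ∑ j, P i j with hrdef
  set cP : Fin n → ℝ := fun j => ∑ i, P i j with hcPdef
  have hr0 : ∀ i, 0 ≤ r i := fun i => Finset.sum_nonneg fun j _ => hP i j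
  set α : Fin m → ℝ := fun i => if r i = 0 then 1 else min 1 (a i / r i) with hαdef
  have hα0 : ∀ i, 0 ≤ α i := by
    intro i; by_cases h : r i = 0
    · simp [hαdef, h]
    · simp only [hαdef, if_neg h]
      exact le_min zero_le_one (div_nonneg (ha i) (hr0 i))
  have hα1 : ∀ i, α i ≤ 1 := by
    intro i; by_cases h : r i = 0
    · simp [hαdef, h]
    · simp only [hαdef, if_neg h]; exact min_le_left _ _
  set X : Matrix (Fin m) (Fin n) ℝ := fun i j => α i * P i j with hXdef
  have hX0 : ∀ i j, 0 ≤ X i j := fun i j => mul_nonneg (hα0 i) (hP i j)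
  have hXP : ∀ i j, X i j ≤ P i j := by
    intro i j
    calc α i * P i j ≤ 1 * P i j := mul_le_mul_of_nonneg_right (hα1 i) (hP i j)
    _ = P i j := one_mul _
  have hXrow : ∀ i, ∑ j, X i j = min (r i) (a i) := by
    intro i
    have : ∑ j, X i j = α i * r i := by rw [hrdef, Finset.mul_sum]
    rw [this]
    by_cases h : r i = 0
    · simp only [hαdef, if_pos h, one_mul, h]
      exact (min_eq_left (ha i)).symm
    · simp only [hαdef, if_neg h]
      rw [min_mul_of_nonneg _ _ (hr0 i), one_mul, div_mul_cancel₀ _ h]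
  set c : Fin n → ℝ := fun j => ∑ i, X i j with hcdef
  have hc0 : ∀ j, 0 ≤ c j := fun j => Finset.sum_nonneg fun i _ => hX0 i j
  have hccP : ∀ j, c j ≤ cP j := fun j => Finset.sum_le_sum fun i _ => hXP i j
  set β : Fin n → ℝ := fun j => if c j = 0 then 1 else min 1 (b j / c j) with hβdef
  have hβ0 : ∀ j, 0 ≤ β j := by
    intro j; by_cases h : c j = 0
    · simp [hβdef, h]
    · simp only [hβdef, if_neg h]
      exact le_min zero_le_one (div_nonneg (hb j) (hc0 j))
  have hβ1 : ∀ j, β j ≤ 1 := by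
    intro j; by_cases h : c j = 0
    · simp [hβdef, h]
    · simp only [hβdef, if_neg h]; exact min_le_left _ _
  set Y : Matrix (Fin m) (Fin n) ℝ := fun i j => β j * X i j with hYdef
  have hY0 : ∀ i j, 0 ≤ Y i j := fun i j => mul_nonneg (hβ0 j) (hX0 i j)
  have hYX : ∀ i j, Y i j ≤ X i j := by
    intro i j
    calc β j * X i j ≤ 1 * X i j := mul_le_mul_of_nonneg_right (hβ1 j) (hX0 i j)
    _ = X i j := one_mul _
  have hYP : ∀ i j, Y i j ≤ P i j := fun i j => (hYX i j).trans (hXP i j)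
  have hYcol : ∀ j, ∑ i, Y i j = min (c j) (b j) := by
    intro j
    have : ∑ i, Y i j = β j * c j := by rw [hcdef, Finset.mul_sum]
    rw [this]
    by_cases h : c j = 0
    · simp [hβdef, h, min_eq_left (hb j)]
    · simp only [hβdef, if_neg h]
      rw [min_mul_of_nonneg _ _ (hc0 j), one_mul, div_mul_cancel₀ _ h]
  set rY : Fin m → ℝ := fun i => ∑ j, Y i j with hrYdef
  set e : Fin m → ℝ := fun i => a i - rY i with hedef
  have hrYa : ∀ i, rY i ≤ a i := by
    intro i
    calc rY i ≤ ∑ j, X i j := Finset.sum_le_sum fun j _ => hYX i j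
    _ = min (r i) (a i) := hXrow i
    _ ≤ a i := min_le_right _ _
  have he0 : ∀ i, 0 ≤ e i := fun i => sub_nonneg.mpr (hrYa i)
  set f : Fin n → ℝ := fun j => b j - min (c j) (b j) with hfdef
  have hf0 : ∀ j, 0 ≤ f j := fun j => sub_nonneg.mpr (min_le_right _ _)
  set Δ : ℝ := ∑ i, e i with hΔdef
  have hΔ0 : 0 ≤ Δ := Finset.sum_nonneg fun i _ => he0 i
  have hYsum : ∑ i, ∑ j, Y i j = 1 - Δ := by
    have : Δ = (∑ i, a i) - ∑ i, rY i := by rw [hΔdef, Finset.sum_sub_distrib]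
    rw [hasum] at this
    simp only [hrYdef] at this
    linarith
  have hfsum : ∑ j, f j = Δ := by
    have h1 : ∑ j, f j = (∑ j, b j) - ∑ j, min (c j) (b j) := by
      rw [hfdef, Finset.sum_sub_distrib]
    have h2 : ∑ j, min (c j) (b j) = ∑ i, ∑ j, Y i j := by
      rw [Finset.sum_comm]
      exact Finset.sum_congr rfl fun j _ => (hYcol j).symm
    rw [h1, h2, hbsum, hYsum]; ring
  -- zero cases
  have hezero : Δ = 0 → ∀ i, e i = 0 := by
    intro h i
    exact (Finset.sum_eq_zero_iff_of_nonneg (fun i _ => he0 i)).mp h i (mem_univ i)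
  have hfzero : Δ = 0 → ∀ j, f j = 0 := by
    intro h j
    have := hfsum.trans h
    exact (Finset.sum_eq_zero_iff_of_nonneg (fun j _ => hf0 j)).mp this j (mem_univ j)
  refine ⟨fun i j => Y i j + e i * f j / Δ, ?_, ?_, ?_, ?_⟩
  · intro i j
    exact add_nonneg (hY0 i j) (div_nonneg (mul_nonneg (he0 i) (hf0 j)) hΔ0)
  · funext i
    simp only [Matrix.mulVec, dotProduct, mul_one]
    have h1 : ∑ j, (Y i j + e i * f j / Δ) = rY i + (e i / Δ) * ∑ j, f j := by
      rw [Finset.sum_add_distrib, Finset.mul_sum]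
      congr 1
      exact Finset.sum_congr rfl fun j _ => by ring
    rw [h1, hfsum]
    by_cases h : Δ = 0
    · rw [h]
      have := hezero h i
      simp only [hedef] at this
      rw [div_zero, zero_mul, add_zero]; linarith
    · rw [div_mul_cancel₀ _ h]
      simp only [hedef]; ring
  · funext j
    simp only [Matrix.mulVec, Matrix.transpose_apply, dotProduct, mul_one]
    have h1 : ∑ i, (Y i j + e i * f j / Δ) = min (c j) (b j) + (f j / Δ) * ∑ i, e i := by
      rw [Finset.sum_add_distrib, Finset.mul_sum, hYcol]
      congr 1
      exact Finset.sum_congr rfl fun i _ => by ring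
    show ∑ i, (Y i j + e i * f j / Δ) = b j
    rw [h1, ← hΔdef]
    by_cases h : Δ = 0
    · rw [h]
      have := hfzero h j
      simp only [hfdef] at this
      rw [div_zero, zero_mul, add_zero]; linarith
    · rw [div_mul_cancel₀ _ h]
      simp only [hfdef]; ring
  · -- the error bound
    have hmv1 : ∀ i, (P *ᵥ fun _ => 1) i = r i := by
      intro i; simp [Matrix.mulVec, dotProduct, hrdef]
    have hmv2 : ∀ j, (Pᵀ *ᵥ fun _ => 1) j = cP j := by
      intro j; simp [Matrix.mulVec, dotProduct, hcPdef]
    have hRHS : 2 * ((∑ i, |(P *ᵥ fun _ => 1) i - a i|) + (∑ j, |(Pᵀ *ᵥ fun _ => 1) j - b j|))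
        = 2 * ((∑ i, |r i - a i|) + (∑ j, |cP j - b j|)) := by
      congr 2
      · exact Finset.sum_congr rfl fun i _ => by rw [hmv1 i]
      · exact Finset.sum_congr rfl fun j _ => by rw [hmv2 j]
    rw [hRHS]
    -- step 1: entrywise bound
    have step1 : (∑ i, ∑ j, |P i j - (Y i j + e i * f j / Δ)|)
        ≤ (∑ i, ∑ j, (P i j - Y i j)) + ∑ i, ∑ j, e i * f j / Δ := by
      rw [← Finset.sum_add_distrib]
      refine Finset.sum_le_sum fun i _ => ?_
      rw [← Finset.sum_add_distrib]
      refine Finset.sum_le_sum fun j _ => ?_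
      have h1 : 0 ≤ P i j - Y i j := sub_nonneg.mpr (hYP i j)
      have h2 : 0 ≤ e i * f j / Δ := div_nonneg (mul_nonneg (he0 i) (hf0 j)) hΔ0
      have : P i j - (Y i j + e i * f j / Δ) = (P i j - Y i j) - e i * f j / Δ := by ring
      rw [this]
      calc |(P i j - Y i j) - e i * f j / Δ| ≤ |P i j - Y i j| + |e i * f j / Δ| :=
            abs_sub _ _
      _ = (P i j - Y i j) + e i * f j / Δ := by rw [abs_of_nonneg h1, abs_of_nonneg h2]
    have step2 : (∑ i, ∑ j, e i * f j / Δ) = Δ := by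
      by_cases h : Δ = 0
      · rw [h]
        refine Finset.sum_eq_zero fun i _ => Finset.sum_eq_zero fun j _ => ?_
        rw [hezero h i]; ring
      · have : ∀ i, ∑ j, e i * f j / Δ = e i := by
          intro i
          have : ∑ j, e i * f j / Δ = (e i / Δ) * ∑ j, f j := by
            rw [Finset.mul_sum]; exact Finset.sum_congr rfl fun j _ => by ring
          rw [this, hfsum, div_mul_cancel₀ _ h]
        rw [Finset.sum_congr rfl fun i _ => this i]
    -- sums of P - Y
    have hPsum : ∑ i, ∑ j, P i j = ∑ i, r i := by rfl
    have hPYsum : (∑ i, ∑ j, (P i j - Y i j)) = (∑ i, r i) - (1 - Δ) := by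
      have : (∑ i, ∑ j, (P i j - Y i j)) = (∑ i, ∑ j, P i j) - ∑ i, ∑ j, Y i j := by
        rw [← Finset.sum_sub_distrib]
        exact Finset.sum_congr rfl fun i _ => by rw [← Finset.sum_sub_distrib]
      rw [this, hYsum, hPsum]
    -- key inequality: Δ is small
    have hcsum : ∑ j, c j = ∑ i, min (r i) (a i) := by
      rw [hcdef]
      show (∑ j, ∑ i, X i j) = _
      rw [Finset.sum_comm]
      exact Finset.sum_congr rfl fun i _ => hXrow i
    have key : Δ ≤ (1 - ∑ i, r i) + (∑ i, (|r i - a i| + (r i - a i)) / 2) + ∑ j, |cP j - b j| := by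
      have h1 : Δ = 1 - ∑ j, min (c j) (b j) := by
        have h2 : ∑ j, min (c j) (b j) = ∑ i, ∑ j, Y i j := by
          rw [Finset.sum_comm]
          exact Finset.sum_congr rfl fun j _ => (hYcol j).symm
        rw [h2, hYsum]; ring
      have h3 : ∀ j, c j - |cP j - b j| ≤ min (c j) (b j) := by
        intro j
        rcases le_total (c j) (b j) with h | h
        · rw [min_eq_left h]; linarith [abs_nonneg (cP j - b j)]
        · rw [min_eq_right h]
          have : c j - b j ≤ |cP j - b j| :=
            le_trans (by linarith [hccP j]) (le_abs_self _)
          linarith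
      have h4 : (∑ j, c j) - (∑ j, |cP j - b j|) ≤ ∑ j, min (c j) (b j) := by
        rw [← Finset.sum_sub_distrib]
        exact Finset.sum_le_sum fun j _ => h3 j
      have h5 : ∀ i, r i - (|r i - a i| + (r i - a i)) / 2 ≤ min (r i) (a i) := by
        intro i
        rcases le_total (r i) (a i) with h | h
        · rw [min_eq_left h, abs_of_nonpos (by linarith)]; linarith
        · rw [min_eq_right h, abs_of_nonneg (by linarith)]; linarith
      have h6 : (∑ i, r i) - (∑ i, (|r i - a i| + (r i - a i)) / 2) ≤ ∑ j, c j := by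
        rw [hcsum, ← Finset.sum_sub_distrib]
        exact Finset.sum_le_sum fun i _ => h5 i
      linarith
    -- finish
    have hA0 : 0 ≤ ∑ i, |r i - a i| := Finset.sum_nonneg fun i _ => abs_nonneg _
    have hsplit : (∑ i, (|r i - a i| + (r i - a i)) / 2)
        = ((∑ i, |r i - a i|) + ((∑ i, r i) - 1)) / 2 := by
      rw [← hasum, ← Finset.sum_sub_distrib, ← Finset.sum_add_distrib, ← Finset.sum_div]
    rw [hsplit] at key
    calc (∑ i, ∑ j, |P i j - (Y i j + e i * f j / Δ)|)
        ≤ (∑ i, ∑ j, (P i j - Y i j)) + ∑ i, ∑ j, e i * f j / Δ := step1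
      _ = ((∑ i, r i) - (1 - Δ)) + Δ := by rw [step2, hPYsum]
      _ ≤ 2 * ((∑ i, |r i - a i|) + (∑ j, |cP j - b j|)) := by linarith
end

section
/- One-step contraction of the Sinkhorn iteration for M = 2: let (û^(1), û^(2), û^(3)) be a dual-optimal triple. Then for every n ∈ ℕ: d_H(u^(n+1,1), û^(1)) ≤ λ(K^(1))·d_H(u^(n+1,2), û^(2)); d_H(u^(n+1,3), û^(3)) ≤ λ(K^(2))·d_H(u^(n+1,2), û^(2)); and d_H(u^(n+1,2), û^(2)) ≤ max(λ(K^(1)), λ(K^(2)))·max(d_H(u^(n,1), û^(1)), d_H(u^(n,3), û^(3))). -/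
open Matrix Finset Real

noncomputable section

/-- The Hilbert projective (pseudo)metric on the positive orthant:
`d_H(u,v) = log((max_i u_i/v_i) · (max_j v_j/u_j))`. -/
def dH {m : ℕ} (u v : Fin m → ℝ) : ℝ :=
  Real.log ((⨆ i, u i / v i) * (⨆ j, v j / u j))

/-- Birkhoff's ratio `γ(A) = max_{i,j,k,l} (A_{ik}A_{jl})/(A_{jk}A_{il})`. -/
def birkhoffGamma {n m : ℕ} (A : Matrix (Fin n) (Fin m) ℝ) : ℝ :=
  ⨆ p : (Fin n × Fin n) × Fin m × Fin m,
    A p.1.1 p.2.1 * A p.1.2 p.2.2 / (A p.1.2 p.2.1 * A p.1.1 p.2.2)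

/-- Birkhoff's contraction coefficient `λ(A) = (√γ(A) − 1)/(√γ(A) + 1)`. -/
def birkhoffLambda {n m : ℕ} (A : Matrix (Fin n) (Fin m) ℝ) : ℝ :=
  (Real.sqrt (birkhoffGamma A) - 1) / (Real.sqrt (birkhoffGamma A) + 1)

/-- The dual (Lagrangian) function for the sequentially composed OT problem with `M = 2`. -/
def dual2 {m1 m2 m3 : ℕ} (a : Fin m1 → ℝ) (b : Fin m3 → ℝ) (ε : ℝ)
    (C1 : Matrix (Fin m1) (Fin m2) ℝ) (C2 : Matrix (Fin m2) (Fin m3) ℝ)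
    (f1 : Fin m1 → ℝ) (f2 : Fin m2 → ℝ) (f3 : Fin m3 → ℝ) : ℝ :=
  (∑ j, f1 j * a j) + (∑ l, f3 l * b l)
    - ε * ((∑ j, ∑ k, Real.exp ((f1 j - f2 k - C1 j k) / ε))
      + ∑ k, ∑ l, Real.exp ((f2 k + f3 l - C2 k l) / ε))

/-- The matrix `diag(u) K diag(1/v)` induced by the first pair of Sinkhorn vectors. -/
def indMat1 {m1 m2 : ℕ} (u : Fin m1 → ℝ) (K : Matrix (Fin m1) (Fin m2) ℝ)
    (v : Fin m2 → ℝ) : Matrix (Fin m1) (Fin m2) ℝ :=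
  Matrix.diagonal u * K * Matrix.diagonal (fun k => (v k)⁻¹)

/-- The matrix `diag(v) K diag(w)` induced by the second pair of Sinkhorn vectors. -/
def indMat2 {m2 m3 : ℕ} (v : Fin m2 → ℝ) (K : Matrix (Fin m2) (Fin m3) ℝ)
    (w : Fin m3 → ℝ) : Matrix (Fin m2) (Fin m3) ℝ :=
  Matrix.diagonal v * K * Matrix.diagonal w

lemma bdd_fin {ι : Type*} [Finite ι] (f : ι → ℝ) : BddAbove (Set.range f) :=
  (Set.finite_range f).bddAbove

lemma ciSup_pos' {ι : Type*} [Finite ι] [Nonempty ι] (f : ι → ℝ) (hf : ∀ i, 0 < f i) :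
    0 < ⨆ i, f i :=
  (hf (Classical.arbitrary ι)).trans_le (le_ciSup (bdd_fin f) _)

lemma exists_ciSup_eq {ι : Type*} [Finite ι] [Nonempty ι] (f : ι → ℝ) :
    ∃ i, (⨆ j, f j) = f i := by
  obtain ⟨i, hi⟩ := Finite.exists_max f
  exact ⟨i, le_antisymm (ciSup_le hi) (le_ciSup (bdd_fin f) i)⟩

lemma fin_nonempty {m : ℕ} (hm : 0 < m) : Nonempty (Fin m) := ⟨⟨0, hm⟩⟩

lemma dH_symm {m : ℕ} (u v : Fin m → ℝ) : dH u v = dH v u := by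
  unfold dH; rw [mul_comm]

lemma dH_nonneg {m : ℕ} (hm : 0 < m) {u v : Fin m → ℝ}
    (hu : ∀ i, 0 < u i) (hv : ∀ i, 0 < v i) : 0 ≤ dH u v := by
  haveI := fin_nonempty hm
  apply Real.log_nonneg
  obtain i := Classical.arbitrary (Fin m)
  calc (1:ℝ) = (u i / v i) * (v i / u i) := by
        rw [div_mul_div_comm, mul_comm (u i)]; exact (div_self (mul_pos (hv i) (hu i)).ne').symm
    _ ≤ (⨆ i, u i / v i) * (⨆ j, v j / u j) := by
        apply mul_le_mul (le_ciSup (bdd_fin _) i) (le_ciSup (bdd_fin _) i)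
          (le_of_lt (div_pos (hv i) (hu i)))
          (le_of_lt (ciSup_pos' _ (fun j => div_pos (hu j) (hv j))))

lemma dH_eq_of_ratio {m : ℕ} (hm : 0 < m) {u v w z : Fin m → ℝ}
    (hu : ∀ i, 0 < u i) (hv : ∀ i, 0 < v i) (hw : ∀ i, 0 < w i) (hz : ∀ i, 0 < z i)
    (h : ∀ i, u i * z i = w i * v i) : dH u v = dH w z := by
  unfold dH
  have h1 : ∀ i, u i / v i = w i / z i := fun i => by
    rw [div_eq_div_iff (hv i).ne' (hz i).ne']; linarith [h i]
  have h2 : ∀ i, v i / u i = z i / w i := fun i => by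
    rw [div_eq_div_iff (hu i).ne' (hw i).ne']; linarith [h i]
  rw [iSup_congr h1, iSup_congr h2]

lemma entry_le_gamma {n m : ℕ} (A : Matrix (Fin n) (Fin m) ℝ) (hA : ∀ i j, 0 < A i j)
    (i j : Fin n) (k l : Fin m) :
    A i k * A j l ≤ birkhoffGamma A * (A j k * A i l) := by
  have h := le_ciSup (bdd_fin (fun p : (Fin n × Fin n) × Fin m × Fin m =>
    A p.1.1 p.2.1 * A p.1.2 p.2.2 / (A p.1.2 p.2.1 * A p.1.1 p.2.2))) ((i,j),(k,l))
  simp only [birkhoffGamma]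
  rw [div_le_iff₀ (mul_pos (hA j k) (hA i l))] at h
  linarith [h]

lemma gamma_ge_one {n m : ℕ} (hn : 0 < n) (hm : 0 < m) (A : Matrix (Fin n) (Fin m) ℝ)
    (hA : ∀ i j, 0 < A i j) : 1 ≤ birkhoffGamma A := by
  have i : Fin n := ⟨0, hn⟩
  have k : Fin m := ⟨0, hm⟩
  have h := le_ciSup (bdd_fin (fun p : (Fin n × Fin n) × Fin m × Fin m =>
    A p.1.1 p.2.1 * A p.1.2 p.2.2 / (A p.1.2 p.2.1 * A p.1.1 p.2.2))) ((i,i),(k,k))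
  simpa [birkhoffGamma, div_self (mul_pos (hA i k) (hA i k)).ne'] using h

lemma sqrt_gamma_ge_one {n m : ℕ} (hn : 0 < n) (hm : 0 < m) (A : Matrix (Fin n) (Fin m) ℝ)
    (hA : ∀ i j, 0 < A i j) : 1 ≤ Real.sqrt (birkhoffGamma A) := by
  rw [show (1:ℝ) = Real.sqrt 1 from (Real.sqrt_one).symm]
  exact Real.sqrt_le_sqrt (gamma_ge_one hn hm A hA)

lemma lambda_nonneg {n m : ℕ} (hn : 0 < n) (hm : 0 < m) (A : Matrix (Fin n) (Fin m) ℝ)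
    (hA : ∀ i j, 0 < A i j) : 0 ≤ birkhoffLambda A := by
  have := sqrt_gamma_ge_one hn hm A hA
  unfold birkhoffLambda
  apply div_nonneg <;> linarith

lemma gamma_transpose {n m : ℕ} (hn : 0 < n) (hm : 0 < m) (A : Matrix (Fin n) (Fin m) ℝ) :
    birkhoffGamma Aᵀ = birkhoffGamma A := by
  haveI := fin_nonempty hn
  haveI := fin_nonempty hm
  unfold birkhoffGamma
  apply le_antisymm
  · apply ciSup_le
    rintro ⟨⟨i, j⟩, k, l⟩
    have h := le_ciSup (bdd_fin (fun p : (Fin n × Fin n) × Fin m × Fin m =>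
      A p.1.1 p.2.1 * A p.1.2 p.2.2 / (A p.1.2 p.2.1 * A p.1.1 p.2.2))) ((k,l),(i,j))
    simpa [Matrix.transpose_apply, mul_comm] using h
  · apply ciSup_le
    rintro ⟨⟨i, j⟩, k, l⟩
    have h := le_ciSup (bdd_fin (fun p : (Fin m × Fin m) × Fin n × Fin n =>
      Aᵀ p.1.1 p.2.1 * Aᵀ p.1.2 p.2.2 / (Aᵀ p.1.2 p.2.1 * Aᵀ p.1.1 p.2.2))) ((k,l),(i,j))
    simpa [Matrix.transpose_apply, mul_comm] using h

lemma lambda_transpose {n m : ℕ} (hn : 0 < n) (hm : 0 < m) (A : Matrix (Fin n) (Fin m) ℝ) :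
    birkhoffLambda Aᵀ = birkhoffLambda A := by
  unfold birkhoffLambda
  rw [gamma_transpose hn hm]

lemma mulVec_pos {n m : ℕ} (hm : 0 < m) (A : Matrix (Fin n) (Fin m) ℝ)
    (hA : ∀ i j, 0 < A i j) (x : Fin m → ℝ) (hx : ∀ j, 0 < x j) (i : Fin n) :
    0 < (A *ᵥ x) i := by
  haveI := fin_nonempty hm
  apply Finset.sum_pos (fun k _ => mul_pos (hA i k) (hx k)) Finset.univ_nonempty

lemma mulVec_cross {n m : ℕ} (A : Matrix (Fin n) (Fin m) ℝ) (hA : ∀ i j, 0 < A i j)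
    (p q : Fin m → ℝ) (hp : ∀ k, 0 ≤ p k) (hq : ∀ k, 0 ≤ q k) (i j : Fin n) :
    (A *ᵥ q) i * (A *ᵥ p) j ≤ birkhoffGamma A * ((A *ᵥ q) j * (A *ᵥ p) i) := by
  have key : ∀ (k l : Fin m), A i k * q k * (A j l * p l)
      ≤ birkhoffGamma A * (A j k * q k * (A i l * p l)) := by
    intro k l
    nlinarith [mul_nonneg (hq k) (hp l), entry_le_gamma A hA i j k l,
      mul_pos (hA j k) (hA i l)]
  simp only [Matrix.mulVec, dotProduct]
  calc (∑ k, A i k * q k) * (∑ l, A j l * p l)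
      = ∑ k, ∑ l, A i k * q k * (A j l * p l) := Finset.sum_mul_sum _ _ _ _
    _ ≤ ∑ k, ∑ l, birkhoffGamma A * (A j k * q k * (A i l * p l)) :=
        Finset.sum_le_sum (fun k _ => Finset.sum_le_sum (fun l _ => key k l))
    _ = birkhoffGamma A * ((∑ k, A j k * q k) * (∑ l, A i l * p l)) := by
        rw [Finset.sum_mul_sum]; simp [Finset.mul_sum]

lemma mobius_ineq (p q c x y : ℝ) (hp : 0 < p) (hpq : p ≤ q) (hc : 1 ≤ c)
    (hx : 0 < x) (hy : 0 < y) (hxy : x ≤ c^2*y) :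
    (p^2+q^2*x)*((1+y)*(q+p*c)^2) ≤ (p+q*c)^2*((1+x)*(p^2+q^2*y)) := by
  have hq : 0 < q := lt_of_lt_of_le hp hpq
  have hcy : (0:ℝ) < 1 + c^2*y := by nlinarith
  have h1 : (p^2+q^2*x)*(1+c^2*y) ≤ (p^2+q^2*c^2*y)*(1+x) := by nlinarith [mul_nonneg (by nlinarith : (0:ℝ) ≤ q^2-p^2) (by nlinarith : (0:ℝ) ≤ c^2*y - x)]
  have h2 : (p^2+q^2*c^2*y)*((1+y)*(q+p*c)^2) ≤ (p+q*c)^2*((1+c^2*y)*(p^2+q^2*y)) := by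
    nlinarith [mul_nonneg (mul_nonneg (by nlinarith : (0:ℝ) ≤ c^2 - 1)
      (by nlinarith : (0:ℝ) ≤ q^2 - p^2)) (sq_nonneg (c*q*y - p))]
  have hW : (0:ℝ) ≤ (1+y)*(q+p*c)^2 := by positivity
  have hX : (0:ℝ) ≤ 1 + x := by positivity
  have step1 := mul_le_mul_of_nonneg_right h1 hW
  have step2 := mul_le_mul_of_nonneg_right h2 hX
  have : (1+c^2*y) * ((p^2+q^2*x)*((1+y)*(q+p*c)^2))
      ≤ (1+c^2*y) * ((p+q*c)^2*((1+x)*(p^2+q^2*y))) := by nlinarith [step1, step2]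
  exact le_of_mul_le_mul_left this hcy

lemma key_log (c τ : ℝ) (hc : 1 ≤ c) (hτ : 1 ≤ τ) :
    Real.log (c*τ+1) - Real.log (c+τ) ≤ (c-1)/(c+1) * Real.log τ := by
  set g : ℝ → ℝ := fun t => (c-1)/(c+1) * Real.log t - Real.log (c*t+1) + Real.log (c+t)
    with hg
  have hd : ∀ t : ℝ, 0 < t → HasDerivAt g
      ((c-1)/(c+1) * t⁻¹ - c/(c*t+1) + 1/(c+t)) t := by
    intro t ht
    have h1 : (0:ℝ) < c*t+1 := by nlinarith
    have h2 : (0:ℝ) < c+t := by nlinarith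
    have d1 : HasDerivAt (fun t : ℝ => (c-1)/(c+1) * Real.log t) ((c-1)/(c+1) * t⁻¹) t :=
      (Real.hasDerivAt_log ht.ne').const_mul _
    have d2 : HasDerivAt (fun t : ℝ => Real.log (c*t+1)) (c/(c*t+1)) t := by
      have : HasDerivAt (fun t : ℝ => c*t+1) c t := by
        simpa using ((hasDerivAt_id t).const_mul c).add_const 1
      simpa [div_eq_mul_inv, mul_comm, Function.comp_def] using (Real.hasDerivAt_log h1.ne').comp t this
    have d3 : HasDerivAt (fun t : ℝ => Real.log (c+t)) (1/(c+t)) t := by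
      have : HasDerivAt (fun t : ℝ => c+t) 1 t := by
        simpa using (hasDerivAt_id t).const_add c
      simpa [div_eq_mul_inv, Function.comp_def] using (Real.hasDerivAt_log h2.ne').comp t this
    exact (d1.sub d2).add d3
  have hderiv_nonneg : ∀ t : ℝ, 1 ≤ t →
      0 ≤ (c-1)/(c+1) * t⁻¹ - c/(c*t+1) + 1/(c+t) := by
    intro t ht
    have ht0 : (0:ℝ) < t := by linarith
    have h1 : (0:ℝ) < c*t+1 := by nlinarith
    have h2 : (0:ℝ) < c+t := by nlinarith
    have h3 : (0:ℝ) < c+1 := by linarith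
    have e : (c-1)/(c+1) * t⁻¹ - c/(c*t+1) + 1/(c+t)
        = (c*(c-1)*(t-1)^2)/((c+1)*t*((c*t+1)*(c+t))) := by
      field_simp
      ring
    rw [e]
    apply div_nonneg
    · have := mul_nonneg (mul_nonneg (by linarith : (0:ℝ) ≤ c) (by linarith : (0:ℝ) ≤ c-1)) (sq_nonneg (t-1)); linarith
    · positivity
  have hmono : MonotoneOn g (Set.Ici 1) := by
    apply monotoneOn_of_deriv_nonneg (convex_Ici 1)
    · intro t ht
      exact (hd t (by simp at ht; linarith)).continuousAt.continuousWithinAt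
    · intro t ht
      rw [interior_Ici] at ht
      exact (hd t (by simp at ht; linarith)).differentiableAt.differentiableWithinAt
    · intro t ht
      rw [interior_Ici] at ht
      rw [(hd t (by simp at ht; linarith)).deriv]
      exact hderiv_nonneg t (le_of_lt ht)
  have h0 : g 1 = 0 := by simp [hg]
  have := hmono (Set.self_mem_Ici) (Set.mem_Ici.mpr hτ) hτ
  rw [h0] at this
  simp only [hg] at this
  linarith

lemma mobius_cleared (p q c Pi Qi Pj Qj : ℝ) (hp : 0 < p) (hpq : p ≤ q) (hc : 1 ≤ c)
    (hPi : 0 < Pi) (hQi : 0 ≤ Qi) (hPj : 0 < Pj) (hQj : 0 ≤ Qj)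
    (hcross : Qi * Pj ≤ c^2 * (Qj * Pi)) :
    (p^2*Pi+q^2*Qi)*((Pj+Qj)*(q+p*c)^2) ≤ (p+q*c)^2*((Pi+Qi)*(p^2*Pj+q^2*Qj)) := by
  have hq : 0 < q := lt_of_lt_of_le hp hpq
  have hD : (0:ℝ) < Pj + c^2*Qj := by nlinarith
  have h1 : (p^2*Pi+q^2*Qi)*(Pj+c^2*Qj) ≤ (p^2*Pj+q^2*c^2*Qj)*(Pi+Qi) := by
    nlinarith [mul_nonneg (by nlinarith : (0:ℝ) ≤ q^2-p^2)
      (by nlinarith : (0:ℝ) ≤ c^2*(Qj*Pi) - Qi*Pj)]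
  have h2 : (p^2*Pj+q^2*c^2*Qj)*((Pj+Qj)*(q+p*c)^2)
      ≤ (p+q*c)^2*((Pj+c^2*Qj)*(p^2*Pj+q^2*Qj)) := by
    nlinarith [mul_nonneg (mul_nonneg (by nlinarith : (0:ℝ) ≤ c^2-1)
      (by nlinarith : (0:ℝ) ≤ q^2-p^2)) (sq_nonneg (c*q*Qj - p*Pj))]
  have hW : (0:ℝ) ≤ (Pj+Qj)*(q+p*c)^2 := by positivity
  have hX : (0:ℝ) ≤ Pi + Qi := by positivity
  have step1 := mul_le_mul_of_nonneg_right h1 hW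
  have step2 := mul_le_mul_of_nonneg_right h2 hX
  have key : (Pj + c^2*Qj) * ((p^2*Pi+q^2*Qi)*((Pj+Qj)*(q+p*c)^2))
      ≤ (Pj + c^2*Qj) * ((p+q*c)^2*((Pi+Qi)*(p^2*Pj+q^2*Qj))) := by
    nlinarith [step1, step2]
  exact le_of_mul_le_mul_left key hD

lemma birkhoff_contraction {n m : ℕ} (hn : 0 < n) (hm : 0 < m)
    (A : Matrix (Fin n) (Fin m) ℝ) (hA : ∀ i j, 0 < A i j)
    (x y : Fin m → ℝ) (hx : ∀ k, 0 < x k) (hy : ∀ k, 0 < y k) :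
    dH (A *ᵥ x) (A *ᵥ y) ≤ birkhoffLambda A * dH x y := by
  haveI := fin_nonempty hn
  haveI := fin_nonempty hm
  set M := ⨆ k, x k / y k with hM
  set N := ⨆ k, y k / x k with hN
  have hMpos : 0 < M := ciSup_pos' _ (fun k => div_pos (hx k) (hy k))
  have hNpos : 0 < N := ciSup_pos' _ (fun k => div_pos (hy k) (hx k))
  set m0 := N⁻¹ with hm0
  have hm0pos : 0 < m0 := inv_pos.mpr hNpos
  have hdxy : dH x y = Real.log (M * N) := rfl
  have hub : ∀ k, x k ≤ M * y k := by
    intro k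
    have h := le_ciSup (bdd_fin fun k => x k / y k) k
    rw [div_le_iff₀ (hy k)] at h
    rw [hM]; linarith [h]
  have hlb : ∀ k, m0 * y k ≤ x k := by
    intro k
    have h := le_ciSup (bdd_fin fun k => y k / x k) k
    rw [div_le_iff₀ (hx k)] at h
    calc m0 * y k ≤ m0 * (N * x k) := by
          apply mul_le_mul_of_nonneg_left (by rw [hN]; linarith [h]) hm0pos.le
      _ = x k := by rw [hm0, ← mul_assoc, inv_mul_cancel₀ hNpos.ne', one_mul]
  have hm0M : m0 ≤ M := by
    obtain k := Classical.arbitrary (Fin m)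
    nlinarith [hlb k, hub k, hy k]
  -- gamma constants
  have hγ1 : (1:ℝ) ≤ birkhoffGamma A := gamma_ge_one hn hm A hA
  set c := Real.sqrt (birkhoffGamma A) with hcdef
  have hc1 : 1 ≤ c := sqrt_gamma_ge_one hn hm A hA
  have hc2 : c^2 = birkhoffGamma A := Real.sq_sqrt (by linarith)
  have hlam : birkhoffLambda A = (c-1)/(c+1) := rfl
  rcases eq_or_lt_of_le hm0M with heq | hlt
  · -- degenerate case: x = M • y
    have hxy : ∀ k, x k = M * y k := fun k => le_antisymm (hub k) (by rw [← heq]; exact hlb k)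
    have hAx : ∀ i, (A *ᵥ x) i = M * (A *ᵥ y) i := by
      intro i
      simp only [Matrix.mulVec, dotProduct, Finset.mul_sum]
      apply Finset.sum_congr rfl
      intro k _
      rw [hxy k]; ring
    have hAypos : ∀ i, 0 < (A *ᵥ y) i := mulVec_pos hm A hA y hy
    have h1 : dH (A *ᵥ x) (A *ᵥ y) = 0 := by
      unfold dH
      have e1 : ∀ i, (A *ᵥ x) i / (A *ᵥ y) i = M := fun i => by
        rw [hAx i, mul_div_assoc, div_self (hAypos i).ne', mul_one]
      have e2 : ∀ i, (A *ᵥ y) i / (A *ᵥ x) i = M⁻¹ := fun i => by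
        rw [hAx i, eq_comm, inv_eq_iff_eq_inv, eq_comm, inv_div,
          mul_div_assoc, div_self (hAypos i).ne', mul_one]
      rw [iSup_congr e1, iSup_congr e2, ciSup_const, ciSup_const,
        mul_inv_cancel₀ hMpos.ne', Real.log_one]
    have hMN : M * N = 1 := by
      have : N⁻¹ = M := heq
      rw [← this, inv_mul_cancel₀ hNpos.ne']
    rw [h1, hdxy, hMN, Real.log_one, mul_zero]
  · -- main case: m0 < M
    have hMm : 0 < M - m0 := sub_pos.mpr hlt
    set p := fun k => (M * y k - x k)/(M - m0) with hpdef
    set q := fun k => (x k - m0 * y k)/(M - m0) with hqdef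
    have hp0 : ∀ k, 0 ≤ p k := fun k => div_nonneg (by linarith [hub k]) hMm.le
    have hq0 : ∀ k, 0 ≤ q k := fun k => div_nonneg (by linarith [hlb k]) hMm.le
    have hsum : ∀ k, p k + q k = y k := by
      intro k
      simp only [hpdef, hqdef]
      rw [← add_div, div_eq_iff hMm.ne']
      ring
    have hxc : ∀ k, m0 * p k + M * q k = x k := by
      intro k
      simp only [hpdef, hqdef]
      rw [← mul_div_assoc, ← mul_div_assoc, ← add_div, div_eq_iff hMm.ne']
      ring
    obtain ⟨k2, hk2⟩ := exists_ciSup_eq (fun k => x k / y k)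
    have hqk2 : 0 < q k2 := by
      have hx2 : x k2 = M * y k2 := by
        have : M = x k2 / y k2 := hk2
        rw [this, div_mul_cancel₀ _ (hy k2).ne']
      apply div_pos _ hMm
      rw [hx2]
      nlinarith [hy k2]
    obtain ⟨k1, hk1⟩ := exists_ciSup_eq (fun k => y k / x k)
    have hpk1 : 0 < p k1 := by
      have hx1 : x k1 = m0 * y k1 := by
        have h : N = y k1 / x k1 := hk1
        rw [hm0, h, inv_div, div_mul_cancel₀ _ (hy k1).ne']
      apply div_pos _ hMm
      rw [hx1]
      nlinarith [hy k1]
    set P := fun i => (A *ᵥ p) i with hPdef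
    set Q := fun i => (A *ᵥ q) i with hQdef
    have hP : ∀ i, 0 < P i := by
      intro i
      simp only [hPdef, Matrix.mulVec, dotProduct]
      apply Finset.sum_pos' (fun k _ => mul_nonneg (hA i k).le (hp0 k))
      exact ⟨k1, Finset.mem_univ _, mul_pos (hA i k1) hpk1⟩
    have hQ : ∀ i, 0 < Q i := by
      intro i
      simp only [hQdef, Matrix.mulVec, dotProduct]
      apply Finset.sum_pos' (fun k _ => mul_nonneg (hA i k).le (hq0 k))
      exact ⟨k2, Finset.mem_univ _, mul_pos (hA i k2) hqk2⟩
    have hAx : ∀ i, (A *ᵥ x) i = m0 * P i + M * Q i := by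
      intro i
      simp only [hPdef, hQdef, Matrix.mulVec, dotProduct, Finset.mul_sum,
        ← Finset.sum_add_distrib]
      apply Finset.sum_congr rfl
      intro k _
      rw [← hxc k]; ring
    have hAy : ∀ i, (A *ᵥ y) i = P i + Q i := by
      intro i
      simp only [hPdef, hQdef, Matrix.mulVec, dotProduct,
        ← Finset.sum_add_distrib]
      apply Finset.sum_congr rfl
      intro k _
      rw [← hsum k]; ring
    have hAxpos : ∀ i, 0 < (A *ᵥ x) i := mulVec_pos hm A hA x hx
    have hAypos : ∀ i, 0 < (A *ᵥ y) i := mulVec_pos hm A hA y hy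
    -- sqrt constants
    set pp := Real.sqrt m0 with hppdef
    set qq := Real.sqrt M with hqqdef
    have hpp : 0 < pp := Real.sqrt_pos.mpr hm0pos
    have hqq : 0 < qq := Real.sqrt_pos.mpr hMpos
    have hppqq : pp ≤ qq := Real.sqrt_le_sqrt hm0M
    have hpp2 : pp^2 = m0 := Real.sq_sqrt hm0pos.le
    have hqq2 : qq^2 = M := Real.sq_sqrt hMpos.le
    -- maximizers of the output ratios
    obtain ⟨i0, hi0⟩ := exists_ciSup_eq (fun i => (A *ᵥ x) i / (A *ᵥ y) i)
    obtain ⟨j0, hj0⟩ := exists_ciSup_eq (fun j => (A *ᵥ y) j / (A *ᵥ x) j)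
    have cross : Q i0 * P j0 ≤ c^2 * (Q j0 * P i0) := by
      rw [hc2]
      exact mulVec_cross A hA p q hp0 hq0 i0 j0
    have key := mobius_cleared pp qq c (P i0) (Q i0) (P j0) (Q j0) hpp hppqq hc1
      (hP i0) (hQ i0).le (hP j0) (hQ j0).le cross
    rw [hpp2, hqq2] at key
    have key2 : (A *ᵥ x) i0 * (A *ᵥ y) j0 * (qq+pp*c)^2
        ≤ (pp+qq*c)^2 * ((A *ᵥ y) i0 * (A *ᵥ x) j0) := by
      rw [hAx i0, hAy j0, hAy i0, hAx j0]
      ring_nf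
      ring_nf at key
      linarith [key]
    have hqppc : 0 < qq + pp*c := by positivity
    have hpqqc : 0 < pp + qq*c := by positivity
    have hFpos : 0 < (A *ᵥ x) i0 / (A *ᵥ y) i0 * ((A *ᵥ y) j0 / (A *ᵥ x) j0) := by
      apply mul_pos (div_pos (hAxpos i0) (hAypos i0)) (div_pos (hAypos j0) (hAxpos j0))
    have hFle : (A *ᵥ x) i0 / (A *ᵥ y) i0 * ((A *ᵥ y) j0 / (A *ᵥ x) j0)
        ≤ ((pp+qq*c)/(qq+pp*c))^2 := by
      rw [div_mul_div_comm, div_pow,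
        div_le_div_iff₀ (mul_pos (hAypos i0) (hAxpos j0)) (by positivity)]
      ring_nf
      ring_nf at key2
      linarith [key2]
    have hdH : dH (A *ᵥ x) (A *ᵥ y)
        = Real.log ((A *ᵥ x) i0 / (A *ᵥ y) i0 * ((A *ᵥ y) j0 / (A *ᵥ x) j0)) := by
      unfold dH
      rw [← hi0, ← hj0]
    set τ := qq / pp with hτdef
    have hτ1 : 1 ≤ τ := (one_le_div hpp).mpr hppqq
    have hτpos : 0 < τ := lt_of_lt_of_le one_pos hτ1
    have hstep := key_log c τ hc1 hτ1
    have hcτ : (0:ℝ) < c*τ+1 := by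
      have := mul_pos (lt_of_lt_of_le one_pos hc1) hτpos
      linarith
    have hcτ' : (0:ℝ) < c+τ := by linarith
    have e1 : pp + qq*c = pp*(c*τ+1) := by
      rw [hτdef]
      field_simp
      ring
    have e2 : qq + pp*c = pp*(c+τ) := by
      rw [hτdef]
      field_simp
      ring
    have hMN : M * N = τ^2 := by
      rw [hτdef, div_pow, hpp2, hqq2]
      rw [hm0]
      field_simp
    calc dH (A *ᵥ x) (A *ᵥ y)
        = Real.log ((A *ᵥ x) i0 / (A *ᵥ y) i0 * ((A *ᵥ y) j0 / (A *ᵥ x) j0)) := hdH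
      _ ≤ Real.log (((pp+qq*c)/(qq+pp*c))^2) := Real.log_le_log hFpos hFle
      _ = 2*(Real.log (c*τ+1) - Real.log (c+τ)) := by
          rw [Real.log_pow, Real.log_div hpqqc.ne' hqppc.ne', e1, e2,
            Real.log_mul hpp.ne' hcτ.ne', Real.log_mul hpp.ne' hcτ'.ne']
          push_cast
          ring
      _ ≤ 2*((c-1)/(c+1) * Real.log τ) := by linarith
      _ = birkhoffLambda A * dH x y := by
          rw [hlam, hdxy, hMN, Real.log_pow]
          push_cast
          ring

lemma sum_perturb_add {m : ℕ} (f g : Fin m → ℝ) (j0 : Fin m) (d : ℝ)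
    (h : g j0 = f j0 + d) (h2 : ∀ j, j ≠ j0 → g j = f j) :
    ∑ j, g j = (∑ j, f j) + d := by
  have e : ∀ j ∈ Finset.univ, g j = f j + if j = j0 then d else 0 := by
    intro j _
    by_cases hj : j = j0
    · subst hj; simp [h]
    · simp [hj, h2 j hj]
  rw [Finset.sum_congr rfl e, Finset.sum_add_distrib, Finset.sum_ite_eq']
  simp

lemma sum_perturb_mul {m : ℕ} (f g : Fin m → ℝ) (j0 : Fin m) (r : ℝ)
    (h : g j0 = r * f j0) (h2 : ∀ j, j ≠ j0 → g j = f j) :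
    ∑ j, g j = (∑ j, f j) + (r - 1) * f j0 :=
  sum_perturb_add f g j0 ((r-1) * f j0) (by rw [h]; ring) h2

lemma eq_of_log_bound (a A : ℝ) (ha : 0 < a) (hA : 0 < A)
    (h : a * Real.log (a/A) ≤ a - A) : A = a := by
  by_contra hne
  have hr : A/a ≠ 1 := by
    intro hc
    exact hne (by field_simp at hc; linarith)
  have hlt := Real.log_lt_sub_one_of_pos (div_pos hA ha) hr
  have hlog : Real.log (a/A) = - Real.log (A/a) := by
    rw [← Real.log_inv, inv_div]
  rw [hlog] at h
  have hda : A/a * a = A := div_mul_cancel₀ _ ha.ne'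
  nlinarith [hlt, ha]

lemma eq_of_am_gm (A B : ℝ) (hA : 0 < A) (hB : 0 < B)
    (h : A + B ≤ Real.sqrt A * Real.sqrt B + Real.sqrt A * Real.sqrt B) : A = B := by
  have h1 : (Real.sqrt A - Real.sqrt B)^2 = 0 := by
    nlinarith [Real.sq_sqrt hA.le, Real.sq_sqrt hB.le, sq_nonneg (Real.sqrt A - Real.sqrt B)]
  have h2 : Real.sqrt A = Real.sqrt B := by
    have := pow_eq_zero_iff (n := 2) (by norm_num) |>.mp h1
    linarith [this]
  calc A = Real.sqrt A ^ 2 := (Real.sq_sqrt hA.le).symm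
    _ = Real.sqrt B ^ 2 := by rw [h2]
    _ = B := Real.sq_sqrt hB.le

lemma opt_conditions {m1 m2 m3 : ℕ} (hm1 : 0 < m1) (hm2 : 0 < m2) (hm3 : 0 < m3)
    (C1 : Matrix (Fin m1) (Fin m2) ℝ) (C2 : Matrix (Fin m2) (Fin m3) ℝ)
    (a : Fin m1 → ℝ) (b : Fin m3 → ℝ)
    (ha : ∀ j, 0 < a j) (hb : ∀ l, 0 < b l)
    (ε : ℝ) (hε : 0 < ε)
    (K1 : Matrix (Fin m1) (Fin m2) ℝ) (K2 : Matrix (Fin m2) (Fin m3) ℝ)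
    (hK1 : ∀ j k, K1 j k = Real.exp (-C1 j k / ε))
    (hK2 : ∀ k l, K2 k l = Real.exp (-C2 k l / ε))
    (uh1 : Fin m1 → ℝ) (uh2 : Fin m2 → ℝ) (uh3 : Fin m3 → ℝ)
    (hpos1 : ∀ j, 0 < uh1 j) (hpos2 : ∀ k, 0 < uh2 k) (hpos3 : ∀ l, 0 < uh3 l)
    (hopt : ∀ (f1 : Fin m1 → ℝ) (f2 : Fin m2 → ℝ) (f3 : Fin m3 → ℝ),
      dual2 a b ε C1 C2 f1 f2 f3 ≤
        dual2 a b ε C1 C2 (fun j => ε * Real.log (uh1 j))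
          (fun k => ε * Real.log (uh2 k)) (fun l => ε * Real.log (uh3 l))) :
    (∀ j, uh1 j * (K1 *ᵥ fun k => (uh2 k)⁻¹) j = a j) ∧
    (∀ l, uh3 l * (K2ᵀ *ᵥ uh2) l = b l) ∧
    (∀ k, uh2 k = Real.sqrt ((K1ᵀ *ᵥ uh1) k / (K2 *ᵥ uh3) k)) := by
  haveI := fin_nonempty hm1
  haveI := fin_nonempty hm2
  haveI := fin_nonempty hm3
  set f1 : Fin m1 → ℝ := fun j => ε * Real.log (uh1 j) with hf1
  set f2 : Fin m2 → ℝ := fun k => ε * Real.log (uh2 k) with hf2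
  set f3 : Fin m3 → ℝ := fun l => ε * Real.log (uh3 l) with hf3
  have hterm1 : ∀ j k, Real.exp ((f1 j - f2 k - C1 j k)/ε)
      = uh1 j * (uh2 k)⁻¹ * K1 j k := by
    intro j k
    have e : (f1 j - f2 k - C1 j k)/ε
        = Real.log (uh1 j) + (Real.log ((uh2 k)⁻¹) + (-C1 j k / ε)) := by
      rw [Real.log_inv]
      simp only [hf1, hf2]
      field_simp
      ring
    rw [e, Real.exp_add, Real.exp_add, Real.exp_log (hpos1 j),
      Real.exp_log (inv_pos.mpr (hpos2 k)), hK1 j k, mul_assoc]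
  have hterm2 : ∀ k l, Real.exp ((f2 k + f3 l - C2 k l)/ε)
      = uh2 k * uh3 l * K2 k l := by
    intro k l
    have e : (f2 k + f3 l - C2 k l)/ε
        = Real.log (uh2 k) + (Real.log (uh3 l) + (-C2 k l / ε)) := by
      simp only [hf2, hf3]
      field_simp
      ring
    rw [e, Real.exp_add, Real.exp_add, Real.exp_log (hpos2 k),
      Real.exp_log (hpos3 l), hK2 k l, mul_assoc]
  refine ⟨?_, ?_, ?_⟩
  · -- condition 1
    intro j0
    set A := ∑ k, Real.exp ((f1 j0 - f2 k - C1 j0 k)/ε) with hAdef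
    have hApos : 0 < A :=
      Finset.sum_pos (fun k _ => Real.exp_pos _) Finset.univ_nonempty
    have key : ∀ t : ℝ,
        dual2 a b ε C1 C2 (fun j => f1 j + if j = j0 then t else 0) f2 f3
          = dual2 a b ε C1 C2 f1 f2 f3
            + (t * a j0 - ε * ((Real.exp (t/ε) - 1) * A)) := by
      intro t
      unfold dual2
      have lin : ∑ j, (f1 j + if j = j0 then t else 0) * a j
          = (∑ j, f1 j * a j) + t * a j0 := by
        apply sum_perturb_add (fun j => f1 j * a j) _ j0
        · simp; ring
        · intro j hj; simp [hj]
      have ex : ∑ j, ∑ k, Real.exp (((f1 j + if j = j0 then t else 0) - f2 k - C1 j k)/ε)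
          = (∑ j, ∑ k, Real.exp ((f1 j - f2 k - C1 j k)/ε)) + (Real.exp (t/ε) - 1) * A := by
        apply sum_perturb_mul (fun j => ∑ k, Real.exp ((f1 j - f2 k - C1 j k)/ε)) _ j0
        · rw [if_pos rfl, Finset.mul_sum]
          apply Finset.sum_congr rfl
          intro k _
          rw [← Real.exp_add]
          congr 1
          field_simp
          ring
        · intro j hj; simp [hj]
      rw [lin, ex]
      ring
    have hs : ∀ s : ℝ, s * a j0 ≤ (Real.exp s - 1) * A := by
      intro s
      have h := hopt (fun j => f1 j + if j = j0 then ε * s else 0) f2 f3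
      rw [key (ε * s)] at h
      have he : (ε*s)/ε = s := by field_simp
      rw [he] at h
      have h2 : ε * (s * a j0 - (Real.exp s - 1) * A) ≤ ε * 0 := by
        rw [mul_zero]; nlinarith [h]
      have := le_of_mul_le_mul_left h2 hε
      linarith
    have hAa : A = a j0 := by
      apply eq_of_log_bound (a j0) A (ha j0) hApos
      have h := hs (Real.log (a j0 / A))
      rw [Real.exp_log (div_pos (ha j0) hApos)] at h
      have hc : (a j0 / A - 1) * A = a j0 - A := by field_simp
      nlinarith [h]
    have hA2 : A = uh1 j0 * (K1 *ᵥ fun k => (uh2 k)⁻¹) j0 := by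
      rw [hAdef]
      simp only [Matrix.mulVec, dotProduct, Finset.mul_sum]
      apply Finset.sum_congr rfl
      intro k _
      rw [hterm1 j0 k]
      ring
    rw [← hA2, hAa]
  · -- condition 2
    intro l0
    set B := ∑ k, Real.exp ((f2 k + f3 l0 - C2 k l0)/ε) with hBdef
    have hBpos : 0 < B :=
      Finset.sum_pos (fun k _ => Real.exp_pos _) Finset.univ_nonempty
    have key : ∀ t : ℝ,
        dual2 a b ε C1 C2 f1 f2 (fun l => f3 l + if l = l0 then t else 0)
          = dual2 a b ε C1 C2 f1 f2 f3
            + (t * b l0 - ε * ((Real.exp (t/ε) - 1) * B)) := by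
      intro t
      unfold dual2
      have lin : ∑ l, (f3 l + if l = l0 then t else 0) * b l
          = (∑ l, f3 l * b l) + t * b l0 := by
        apply sum_perturb_add (fun l => f3 l * b l) _ l0
        · simp; ring
        · intro l hl; simp [hl]
      have ex : ∑ k, ∑ l, Real.exp ((f2 k + (f3 l + if l = l0 then t else 0) - C2 k l)/ε)
          = (∑ k, ∑ l, Real.exp ((f2 k + f3 l - C2 k l)/ε)) + (Real.exp (t/ε) - 1) * B := by
        rw [Finset.sum_comm,
          show (∑ k, ∑ l, Real.exp ((f2 k + f3 l - C2 k l)/ε))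
            = ∑ l, ∑ k, Real.exp ((f2 k + f3 l - C2 k l)/ε) from Finset.sum_comm]
        apply sum_perturb_mul (fun l => ∑ k, Real.exp ((f2 k + f3 l - C2 k l)/ε)) _ l0
        · rw [if_pos rfl, Finset.mul_sum]
          apply Finset.sum_congr rfl
          intro k _
          rw [← Real.exp_add]
          congr 1
          field_simp
          ring
        · intro l hl; simp [hl]
      rw [lin, ex]
      ring
    have hs : ∀ s : ℝ, s * b l0 ≤ (Real.exp s - 1) * B := by
      intro s
      have h := hopt f1 f2 (fun l => f3 l + if l = l0 then ε * s else 0)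
      rw [key (ε * s)] at h
      have he : (ε*s)/ε = s := by field_simp
      rw [he] at h
      have h2 : ε * (s * b l0 - (Real.exp s - 1) * B) ≤ ε * 0 := by
        rw [mul_zero]; nlinarith [h]
      have := le_of_mul_le_mul_left h2 hε
      linarith
    have hBb : B = b l0 := by
      apply eq_of_log_bound (b l0) B (hb l0) hBpos
      have h := hs (Real.log (b l0 / B))
      rw [Real.exp_log (div_pos (hb l0) hBpos)] at h
      have hc : (b l0 / B - 1) * B = b l0 - B := by field_simp
      nlinarith [h]
    have hB2 : B = uh3 l0 * (K2ᵀ *ᵥ uh2) l0 := by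
      rw [hBdef]
      simp only [Matrix.mulVec, dotProduct, Matrix.transpose_apply, Finset.mul_sum]
      apply Finset.sum_congr rfl
      intro k _
      rw [hterm2 k l0]
      ring
    rw [← hB2, hBb]
  · -- condition 3
    intro k0
    set A := ∑ j, Real.exp ((f1 j - f2 k0 - C1 j k0)/ε) with hAdef
    set B := ∑ l, Real.exp ((f2 k0 + f3 l - C2 k0 l)/ε) with hBdef
    have hApos : 0 < A :=
      Finset.sum_pos (fun j _ => Real.exp_pos _) Finset.univ_nonempty
    have hBpos : 0 < B :=
      Finset.sum_pos (fun l _ => Real.exp_pos _) Finset.univ_nonempty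
    have key : ∀ t : ℝ,
        dual2 a b ε C1 C2 f1 (fun k => f2 k + if k = k0 then t else 0) f3
          = dual2 a b ε C1 C2 f1 f2 f3
            - ε * ((Real.exp (-t/ε) - 1) * A + (Real.exp (t/ε) - 1) * B) := by
      intro t
      unfold dual2
      have ex1 : ∑ j, ∑ k, Real.exp ((f1 j - (f2 k + if k = k0 then t else 0) - C1 j k)/ε)
          = (∑ j, ∑ k, Real.exp ((f1 j - f2 k - C1 j k)/ε)) + (Real.exp (-t/ε) - 1) * A := by
        rw [Finset.sum_comm,
          show (∑ j, ∑ k, Real.exp ((f1 j - f2 k - C1 j k)/ε))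
            = ∑ k, ∑ j, Real.exp ((f1 j - f2 k - C1 j k)/ε) from Finset.sum_comm]
        apply sum_perturb_mul (fun k => ∑ j, Real.exp ((f1 j - f2 k - C1 j k)/ε)) _ k0
        · rw [if_pos rfl, Finset.mul_sum]
          apply Finset.sum_congr rfl
          intro j _
          rw [← Real.exp_add]
          congr 1
          field_simp
          ring
        · intro k hk; simp [hk]
      have ex2 : ∑ k, ∑ l, Real.exp (((f2 k + if k = k0 then t else 0) + f3 l - C2 k l)/ε)
          = (∑ k, ∑ l, Real.exp ((f2 k + f3 l - C2 k l)/ε)) + (Real.exp (t/ε) - 1) * B := by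
        apply sum_perturb_mul (fun k => ∑ l, Real.exp ((f2 k + f3 l - C2 k l)/ε)) _ k0
        · rw [if_pos rfl, Finset.mul_sum]
          apply Finset.sum_congr rfl
          intro l _
          rw [← Real.exp_add]
          congr 1
          field_simp
          ring
        · intro k hk; simp [hk]
      rw [ex1, ex2]
      ring
    have hs : ∀ s : ℝ, A + B ≤ Real.exp (-s) * A + Real.exp s * B := by
      intro s
      have h := hopt f1 (fun k => f2 k + if k = k0 then ε * s else 0) f3
      rw [key (ε * s)] at h
      have he : (ε*s)/ε = s := by field_simp
      have he' : -(ε*s)/ε = -s := by field_simp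
      rw [he, he'] at h
      have h2 : ε * 0 ≤ ε * ((Real.exp (-s) * A + Real.exp s * B) - (A + B)) := by
        rw [mul_zero]; nlinarith [h]
      have := le_of_mul_le_mul_left h2 hε
      linarith
    have hAB : A = B := by
      apply eq_of_am_gm A B hApos hBpos
      have h := hs (Real.log (Real.sqrt (A/B)))
      have hsq : 0 < Real.sqrt (A/B) := Real.sqrt_pos.mpr (div_pos hApos hBpos)
      rw [Real.exp_log hsq, Real.exp_neg, Real.exp_log hsq] at h
      have hsA : Real.sqrt A * Real.sqrt A = A := Real.mul_self_sqrt hApos.le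
      have hsB : Real.sqrt B * Real.sqrt B = B := Real.mul_self_sqrt hBpos.le
      have hsA0 : Real.sqrt A ≠ 0 := (Real.sqrt_pos.mpr hApos).ne'
      have hsB0 : Real.sqrt B ≠ 0 := (Real.sqrt_pos.mpr hBpos).ne'
      have e1 : (Real.sqrt (A/B))⁻¹ * A = Real.sqrt A * Real.sqrt B := by
        rw [← Real.sqrt_inv, inv_div, Real.sqrt_div hBpos.le, div_mul_eq_mul_div,
          div_eq_iff hsA0]
        linear_combination (- Real.sqrt B) * (Real.sq_sqrt hApos.le)
      have e2 : Real.sqrt (A/B) * B = Real.sqrt A * Real.sqrt B := by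
        rw [Real.sqrt_div hApos.le, div_mul_eq_mul_div, div_eq_iff hsB0]
        linear_combination (- Real.sqrt A) * (Real.sq_sqrt hBpos.le)
      rw [e1, e2] at h
      linarith
    have hKpos1 : ∀ j k, 0 < K1 j k := fun j k => by rw [hK1]; exact Real.exp_pos _
    have hKpos2 : ∀ k l, 0 < K2 k l := fun k l => by rw [hK2]; exact Real.exp_pos _
    have hA2 : A = (uh2 k0)⁻¹ * (K1ᵀ *ᵥ uh1) k0 := by
      rw [hAdef]
      simp only [Matrix.mulVec, dotProduct, Matrix.transpose_apply, Finset.mul_sum]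
      apply Finset.sum_congr rfl
      intro j _
      rw [hterm1 j k0]
      ring
    have hB2 : B = uh2 k0 * (K2 *ᵥ uh3) k0 := by
      rw [hBdef]
      simp only [Matrix.mulVec, dotProduct, Finset.mul_sum]
      apply Finset.sum_congr rfl
      intro l _
      rw [hterm2 k0 l]
      ring
    have hY : 0 < (K2 *ᵥ uh3) k0 := mulVec_pos hm3 K2 hKpos2 uh3 hpos3 k0
    have hsq : (K1ᵀ *ᵥ uh1) k0 / (K2 *ᵥ uh3) k0 = uh2 k0 ^ 2 := by
      rw [div_eq_iff hY.ne']
      have h := hAB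
      rw [hA2, hB2] at h
      have h2 := congrArg (fun z => uh2 k0 * z) h
      rw [← mul_assoc, mul_inv_cancel₀ (hpos2 k0).ne', one_mul] at h2
      rw [h2]
      ring
    rw [hsq, Real.sqrt_sq (hpos2 k0).le]

lemma dH_inv {m : ℕ} (hm : 0 < m) {u v : Fin m → ℝ}
    (hu : ∀ i, 0 < u i) (hv : ∀ i, 0 < v i) :
    dH (fun i => (u i)⁻¹) (fun i => (v i)⁻¹) = dH u v := by
  rw [dH_eq_of_ratio hm (fun i => inv_pos.mpr (hu i)) (fun i => inv_pos.mpr (hv i)) hv hu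
    (fun i => by rw [inv_mul_cancel₀ (hu i).ne', mul_inv_cancel₀ (hv i).ne'])]
  exact dH_symm v u

lemma dH_sqrt_div {m : ℕ} (hm : 0 < m) {p q p' q' : Fin m → ℝ}
    (hp : ∀ k, 0 < p k) (hq : ∀ k, 0 < q k) (hp' : ∀ k, 0 < p' k) (hq' : ∀ k, 0 < q' k) :
    dH (fun k => Real.sqrt (p k / q k)) (fun k => Real.sqrt (p' k / q' k))
      ≤ (dH p p' + dH q q') / 2 := by
  haveI := fin_nonempty hm
  have hPpos : 0 < ⨆ k, p k / p' k := ciSup_pos' _ (fun k => div_pos (hp k) (hp' k))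
  have hP'pos : 0 < ⨆ k, p' k / p k := ciSup_pos' _ (fun k => div_pos (hp' k) (hp k))
  have hQpos : 0 < ⨆ k, q k / q' k := ciSup_pos' _ (fun k => div_pos (hq k) (hq' k))
  have hQ'pos : 0 < ⨆ k, q' k / q k := ciSup_pos' _ (fun k => div_pos (hq' k) (hq k))
  have key : ∀ (x y x' y' : Fin m → ℝ), (∀ k, 0 < x k) → (∀ k, 0 < y k) →
      (∀ k, 0 < x' k) → (∀ k, 0 < y' k) →
      (⨆ k, Real.sqrt (x k / y k) / Real.sqrt (x' k / y' k))
        ≤ Real.sqrt ((⨆ k, x k / x' k) * (⨆ k, y' k / y k)) := by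
    intro x y x' y' hx hy hx' hy'
    have hX : 0 < ⨆ k, x k / x' k := ciSup_pos' _ (fun k => div_pos (hx k) (hx' k))
    apply ciSup_le
    intro k
    have e : Real.sqrt (x k / y k) / Real.sqrt (x' k / y' k)
        = Real.sqrt ((x k / x' k) * (y' k / y k)) := by
      rw [← Real.sqrt_div (div_pos (hx k) (hy k)).le]
      congr 1
      field_simp
    rw [e]
    apply Real.sqrt_le_sqrt
    apply mul_le_mul (le_ciSup (bdd_fin _) k) (le_ciSup (bdd_fin _) k)
      (div_pos (hy' k) (hy k)).le hX.le
  have h1 := key p q p' q' hp hq hp' hq'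
  have h2 := key p' q' p q hp' hq' hp hq
  have hS1pos : 0 < ⨆ k, Real.sqrt (p k / q k) / Real.sqrt (p' k / q' k) :=
    ciSup_pos' _ (fun k => div_pos (Real.sqrt_pos.mpr (div_pos (hp k) (hq k)))
      (Real.sqrt_pos.mpr (div_pos (hp' k) (hq' k))))
  have hS2pos : 0 < ⨆ k, Real.sqrt (p' k / q' k) / Real.sqrt (p k / q k) :=
    ciSup_pos' _ (fun k => div_pos (Real.sqrt_pos.mpr (div_pos (hp' k) (hq' k)))
      (Real.sqrt_pos.mpr (div_pos (hp k) (hq k))))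
  have hprod : (⨆ k, Real.sqrt (p k / q k) / Real.sqrt (p' k / q' k))
      * (⨆ k, Real.sqrt (p' k / q' k) / Real.sqrt (p k / q k))
      ≤ Real.sqrt ((⨆ k, p k / p' k) * (⨆ k, q' k / q k))
        * Real.sqrt ((⨆ k, p' k / p k) * (⨆ k, q k / q' k)) :=
    mul_le_mul h1 h2 hS2pos.le (Real.sqrt_nonneg _)
  calc dH (fun k => Real.sqrt (p k / q k)) (fun k => Real.sqrt (p' k / q' k))
      ≤ Real.log (Real.sqrt ((⨆ k, p k / p' k) * (⨆ k, q' k / q k))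
        * Real.sqrt ((⨆ k, p' k / p k) * (⨆ k, q k / q' k))) :=
        Real.log_le_log (mul_pos hS1pos hS2pos) hprod
    _ = (dH p p' + dH q q') / 2 := by
        unfold dH
        rw [Real.log_mul (Real.sqrt_pos.mpr (mul_pos hPpos hQ'pos)).ne'
          (Real.sqrt_pos.mpr (mul_pos hP'pos hQpos)).ne',
          Real.log_sqrt (mul_pos hPpos hQ'pos).le,
          Real.log_sqrt (mul_pos hP'pos hQpos).le,
          Real.log_mul hPpos.ne' hQ'pos.ne', Real.log_mul hP'pos.ne' hQpos.ne',
          Real.log_mul hPpos.ne' hP'pos.ne', Real.log_mul hQpos.ne' hQ'pos.ne']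
        ring

/-- **One-step contraction of the Sinkhorn iteration for `M = 2`**: each update contracts
the Hilbert distance to the dual-optimal vectors by the Birkhoff coefficients. -/
theorem sinkhorn_one_step_contraction_M2
    {m1 m2 m3 : ℕ} (hm1 : 0 < m1) (hm2 : 0 < m2) (hm3 : 0 < m3)
    (C1 : Matrix (Fin m1) (Fin m2) ℝ) (C2 : Matrix (Fin m2) (Fin m3) ℝ)
    (hC1 : ∀ j k, 0 ≤ C1 j k) (hC2 : ∀ k l, 0 ≤ C2 k l)
    (a : Fin m1 → ℝ) (b : Fin m3 → ℝ)
    (ha : ∀ j, 0 < a j) (hb : ∀ l, 0 < b l)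
    (hasum : ∑ j, a j = 1) (hbsum : ∑ l, b l = 1)
    (ε : ℝ) (hε : 0 < ε)
    (K1 : Matrix (Fin m1) (Fin m2) ℝ) (K2 : Matrix (Fin m2) (Fin m3) ℝ)
    (hK1 : ∀ j k, K1 j k = Real.exp (-C1 j k / ε))
    (hK2 : ∀ k l, K2 k l = Real.exp (-C2 k l / ε))
    (u1 : ℕ → Fin m1 → ℝ) (u2 : ℕ → Fin m2 → ℝ) (u3 : ℕ → Fin m3 → ℝ)
    (h01 : ∀ j, 0 < u1 0 j) (h02 : ∀ k, 0 < u2 0 k) (h03 : ∀ l, 0 < u3 0 l)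
    (hrec2 : ∀ n, u2 (n+1) = fun k => Real.sqrt ((K1ᵀ *ᵥ u1 n) k / (K2 *ᵥ u3 n) k))
    (hrec1 : ∀ n, u1 (n+1) = fun j => a j / (K1 *ᵥ fun k => (u2 (n+1) k)⁻¹) j)
    (hrec3 : ∀ n, u3 (n+1) = fun l => b l / (K2ᵀ *ᵥ u2 (n+1)) l)
    (uh1 : Fin m1 → ℝ) (uh2 : Fin m2 → ℝ) (uh3 : Fin m3 → ℝ)
    (hpos1 : ∀ j, 0 < uh1 j) (hpos2 : ∀ k, 0 < uh2 k) (hpos3 : ∀ l, 0 < uh3 l)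
    (hopt : ∀ (f1 : Fin m1 → ℝ) (f2 : Fin m2 → ℝ) (f3 : Fin m3 → ℝ),
      dual2 a b ε C1 C2 f1 f2 f3 ≤
        dual2 a b ε C1 C2 (fun j => ε * Real.log (uh1 j))
          (fun k => ε * Real.log (uh2 k)) (fun l => ε * Real.log (uh3 l))) :
    ∀ n : ℕ,
      dH (u1 (n+1)) uh1 ≤ birkhoffLambda K1 * dH (u2 (n+1)) uh2 ∧
      dH (u3 (n+1)) uh3 ≤ birkhoffLambda K2 * dH (u2 (n+1)) uh2 ∧
      dH (u2 (n+1)) uh2 ≤ max (birkhoffLambda K1) (birkhoffLambda K2) *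
        max (dH (u1 n) uh1) (dH (u3 n) uh3) := by
  have hKpos1 : ∀ j k, 0 < K1 j k := fun j k => by rw [hK1]; exact Real.exp_pos _
  have hKpos2 : ∀ k l, 0 < K2 k l := fun k l => by rw [hK2]; exact Real.exp_pos _
  have hKpos1' : ∀ k j, 0 < K1ᵀ k j := fun k j => hKpos1 j k
  have hKpos2' : ∀ l k, 0 < K2ᵀ l k := fun l k => hKpos2 k l
  have hP : ∀ n, (∀ j, 0 < u1 n j) ∧ (∀ k, 0 < u2 n k) ∧ (∀ l, 0 < u3 n l) := by
    intro n
    induction n with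
    | zero => exact ⟨h01, h02, h03⟩
    | succ n ih =>
      obtain ⟨ih1, ih2, ih3⟩ := ih
      have h2' : ∀ k, 0 < u2 (n+1) k := by
        intro k
        simp only [hrec2 n]
        exact Real.sqrt_pos.mpr (div_pos (mulVec_pos hm1 K1ᵀ hKpos1' _ ih1 k)
          (mulVec_pos hm3 K2 hKpos2 _ ih3 k))
      have h1' : ∀ j, 0 < u1 (n+1) j := by
        intro j
        simp only [hrec1 n]
        exact div_pos (ha j)
          (mulVec_pos hm2 K1 hKpos1 _ (fun k => inv_pos.mpr (h2' k)) j)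
      have h3' : ∀ l, 0 < u3 (n+1) l := by
        intro l
        simp only [hrec3 n]
        exact div_pos (hb l) (mulVec_pos hm2 K2ᵀ hKpos2' _ h2' l)
      exact ⟨h1', h2', h3'⟩
  obtain ⟨O1, O2, O3⟩ := opt_conditions hm1 hm2 hm3 C1 C2 a b ha hb ε hε K1 K2 hK1 hK2
    uh1 uh2 uh3 hpos1 hpos2 hpos3 hopt
  have hlam1 : 0 ≤ birkhoffLambda K1 := lambda_nonneg hm1 hm2 K1 hKpos1
  have hlam2 : 0 ≤ birkhoffLambda K2 := lambda_nonneg hm2 hm3 K2 hKpos2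
  intro n
  obtain ⟨p1, p2, p3⟩ := hP n
  obtain ⟨q1, q2, q3⟩ := hP (n+1)
  have hXpos : ∀ j, 0 < (K1 *ᵥ fun k => (u2 (n+1) k)⁻¹) j :=
    mulVec_pos hm2 K1 hKpos1 _ (fun k => inv_pos.mpr (q2 k))
  have hXhpos : ∀ j, 0 < (K1 *ᵥ fun k => (uh2 k)⁻¹) j :=
    mulVec_pos hm2 K1 hKpos1 _ (fun k => inv_pos.mpr (hpos2 k))
  have hYpos : ∀ l, 0 < (K2ᵀ *ᵥ u2 (n+1)) l := mulVec_pos hm2 K2ᵀ hKpos2' _ q2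
  have hYhpos : ∀ l, 0 < (K2ᵀ *ᵥ uh2) l := mulVec_pos hm2 K2ᵀ hKpos2' _ hpos2
  have hd2 : dH (fun k => (uh2 k)⁻¹) (fun k => (u2 (n+1) k)⁻¹) = dH (u2 (n+1)) uh2 := by
    rw [dH_inv hm2 hpos2 q2]
    exact dH_symm uh2 (u2 (n+1))
  constructor
  · -- part 1
    have e1 : dH (u1 (n+1)) uh1
        = dH (K1 *ᵥ fun k => (uh2 k)⁻¹) (K1 *ᵥ fun k => (u2 (n+1) k)⁻¹) := by
      apply dH_eq_of_ratio hm1 q1 hpos1 hXhpos hXpos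
      intro j
      have h1 : u1 (n+1) j * (K1 *ᵥ fun k => (u2 (n+1) k)⁻¹) j = a j := by
        simp only [hrec1 n]
        rw [div_mul_cancel₀ _ (hXpos j).ne']
      rw [h1, ← O1 j]
      ring
    rw [e1, ← hd2]
    exact birkhoff_contraction hm1 hm2 K1 hKpos1 _ _
      (fun k => inv_pos.mpr (hpos2 k)) (fun k => inv_pos.mpr (q2 k))
  constructor
  · -- part 2
    have e2 : dH (u3 (n+1)) uh3 = dH (K2ᵀ *ᵥ uh2) (K2ᵀ *ᵥ u2 (n+1)) := by
      apply dH_eq_of_ratio hm3 q3 hpos3 hYhpos hYpos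
      intro l
      have h1 : u3 (n+1) l * (K2ᵀ *ᵥ u2 (n+1)) l = b l := by
        simp only [hrec3 n]
        rw [div_mul_cancel₀ _ (hYpos l).ne']
      rw [h1, ← O2 l]
      ring
    have hb2 : dH (K2ᵀ *ᵥ uh2) (K2ᵀ *ᵥ u2 (n+1)) ≤ birkhoffLambda K2ᵀ * dH uh2 (u2 (n+1)) :=
      birkhoff_contraction hm3 hm2 K2ᵀ hKpos2' _ _ hpos2 q2
    rw [e2]
    rw [lambda_transpose hm2 hm3 K2, dH_symm uh2 (u2 (n+1))] at hb2
    exact hb2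
  · -- part 3
    have huh2e : uh2 = fun k => Real.sqrt ((K1ᵀ *ᵥ uh1) k / (K2 *ᵥ uh3) k) := funext O3
    have hApos : ∀ k, 0 < (K1ᵀ *ᵥ u1 n) k := mulVec_pos hm1 K1ᵀ hKpos1' _ p1
    have hAhpos : ∀ k, 0 < (K1ᵀ *ᵥ uh1) k := mulVec_pos hm1 K1ᵀ hKpos1' _ hpos1
    have hBpos : ∀ k, 0 < (K2 *ᵥ u3 n) k := mulVec_pos hm3 K2 hKpos2 _ p3
    have hBhpos : ∀ k, 0 < (K2 *ᵥ uh3) k := mulVec_pos hm3 K2 hKpos2 _ hpos3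
    have hstep : dH (u2 (n+1)) uh2
        ≤ (dH (K1ᵀ *ᵥ u1 n) (K1ᵀ *ᵥ uh1) + dH (K2 *ᵥ u3 n) (K2 *ᵥ uh3)) / 2 := by
      rw [hrec2 n, huh2e]
      exact dH_sqrt_div hm2 hApos hBpos hAhpos hBhpos
    have hb1 : dH (K1ᵀ *ᵥ u1 n) (K1ᵀ *ᵥ uh1) ≤ birkhoffLambda K1 * dH (u1 n) uh1 := by
      have h := birkhoff_contraction hm2 hm1 K1ᵀ hKpos1' _ _ p1 hpos1
      rwa [lambda_transpose hm1 hm2 K1] at h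
    have hb3 : dH (K2 *ᵥ u3 n) (K2 *ᵥ uh3) ≤ birkhoffLambda K2 * dH (u3 n) uh3 :=
      birkhoff_contraction hm2 hm3 K2 hKpos2 _ _ p3 hpos3
    have dnn1 : 0 ≤ dH (u1 n) uh1 := dH_nonneg hm1 p1 hpos1
    have dnn3 : 0 ≤ dH (u3 n) uh3 := dH_nonneg hm3 p3 hpos3
    have hL : 0 ≤ max (birkhoffLambda K1) (birkhoffLambda K2) := le_trans hlam1 (le_max_left _ _)
    have hm1' : birkhoffLambda K1 * dH (u1 n) uh1
        ≤ max (birkhoffLambda K1) (birkhoffLambda K2) * max (dH (u1 n) uh1) (dH (u3 n) uh3) :=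
      mul_le_mul (le_max_left _ _) (le_max_left _ _) dnn1 hL
    have hm3' : birkhoffLambda K2 * dH (u3 n) uh3
        ≤ max (birkhoffLambda K1) (birkhoffLambda K2) * max (dH (u1 n) uh1) (dH (u3 n) uh3) :=
      mul_le_mul (le_max_right _ _) (le_max_right _ _) dnn3 hL
    linarith
end
end

section
/- Let (û^(1), û^(2), û^(3)) be a dual-optimal triple. Then for every j ≤ m1 and l ≤ m3: û^(1)_j · (Σ_{k≤m2} K^(1)_{jk} K^(2)_{kl}) · û^(3)_l ≤ 1. -/
open Matrix Finset Real

lemma perturb_eq (ε A B : ℝ) (hε : 0 < ε)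
    (h : ∀ t : ℝ, t * A - ε * (Real.exp (t / ε) - 1) * B ≤ 0) : A = B := by
  have hd : HasDerivAt (fun t : ℝ => t * A - ε * (Real.exp (t / ε) - 1) * B) (A - B) 0 := by
    have h0 : HasDerivAt (fun t : ℝ => t / ε) (1 / ε) 0 := by
      simpa using (hasDerivAt_id (0:ℝ)).div_const ε
    have h1 : HasDerivAt (fun t : ℝ => t * A) A 0 := by
      simpa using (hasDerivAt_id (0:ℝ)).mul_const A
    have h2 := (((h0.exp).sub_const 1).const_mul ε).mul_const B
    have := h1.sub h2
    have hεe : ε * ε⁻¹ * B = B := by field_simp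
    simpa [hεe, Pi.sub_def] using this
  have hmax : IsLocalMax (fun t : ℝ => t * A - ε * (Real.exp (t / ε) - 1) * B) 0 := by
    apply Filter.Eventually.of_forall
    intro t
    simpa using h t
  have := hmax.hasDerivAt_eq_zero hd
  linarith

noncomputable section

/-- For a dual-optimal triple `(û¹,û²,û³)`, one has
`û¹_j · (Σ_k K¹_{jk}K²_{kl}) · û³_l ≤ 1` for all `j, l`. -/
theorem dual_optimal_product_bound
    {m1 m2 m3 : ℕ} (hm1 : 0 < m1) (hm2 : 0 < m2) (hm3 : 0 < m3)
    (C1 : Matrix (Fin m1) (Fin m2) ℝ) (C2 : Matrix (Fin m2) (Fin m3) ℝ)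
    (hC1 : ∀ j k, 0 ≤ C1 j k) (hC2 : ∀ k l, 0 ≤ C2 k l)
    (a : Fin m1 → ℝ) (b : Fin m3 → ℝ)
    (ha : ∀ j, 0 < a j) (hb : ∀ l, 0 < b l)
    (hasum : ∑ j, a j = 1) (hbsum : ∑ l, b l = 1)
    (ε : ℝ) (hε : 0 < ε)
    (K1 : Matrix (Fin m1) (Fin m2) ℝ) (K2 : Matrix (Fin m2) (Fin m3) ℝ)
    (hK1 : ∀ j k, K1 j k = Real.exp (-C1 j k / ε))
    (hK2 : ∀ k l, K2 k l = Real.exp (-C2 k l / ε))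
    (uh1 : Fin m1 → ℝ) (uh2 : Fin m2 → ℝ) (uh3 : Fin m3 → ℝ)
    (hpos1 : ∀ j, 0 < uh1 j) (hpos2 : ∀ k, 0 < uh2 k) (hpos3 : ∀ l, 0 < uh3 l)
    (hopt : ∀ (f1 : Fin m1 → ℝ) (f2 : Fin m2 → ℝ) (f3 : Fin m3 → ℝ),
      dual2 a b ε C1 C2 f1 f2 f3 ≤
        dual2 a b ε C1 C2 (fun j => ε * Real.log (uh1 j))
          (fun k => ε * Real.log (uh2 k)) (fun l => ε * Real.log (uh3 l))) :
    ∀ (j : Fin m1) (l : Fin m3), uh1 j * (∑ k, K1 j k * K2 k l) * uh3 l ≤ 1 := by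
  intro j l
  set f1 : Fin m1 → ℝ := fun j => ε * Real.log (uh1 j) with hf1
  set f2 : Fin m2 → ℝ := fun k => ε * Real.log (uh2 k) with hf2
  set f3 : Fin m3 → ℝ := fun l => ε * Real.log (uh3 l) with hf3
  set x : Fin m2 → ℝ := fun k => Real.exp ((f1 j - f2 k - C1 j k) / ε) with hx
  set y : Fin m2 → ℝ := fun k => Real.exp ((f2 k + f3 l - C2 k l) / ε) with hy
  -- First marginal condition: a j = ∑ k, x k
  have hS : a j = ∑ k, x k := by
    apply perturb_eq ε (a j) (∑ k, x k) hε
    intro t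
    have h := hopt (fun j' => f1 j' + if j' = j then t else 0) f2 f3
    have key : dual2 a b ε C1 C2 (fun j' => f1 j' + if j' = j then t else 0) f2 f3
        = dual2 a b ε C1 C2 f1 f2 f3
          + (t * a j - ε * (Real.exp (t / ε) - 1) * (∑ k, x k)) := by
      simp only [dual2]
      have e1 : ∑ j', (f1 j' + if j' = j then t else 0) * a j'
          = (∑ j', f1 j' * a j') + t * a j := by
        simp [add_mul, Finset.sum_add_distrib, ite_mul]
      have e2 : ∀ j' k, Real.exp ((f1 j' + (if j' = j then t else 0) - f2 k - C1 j' k) / ε)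
          = Real.exp ((f1 j' - f2 k - C1 j' k) / ε)
            + (if j' = j then (Real.exp (t / ε) - 1) else 0)
              * Real.exp ((f1 j' - f2 k - C1 j' k) / ε) := by
        intro j' k
        by_cases hc : j' = j
        · subst hc
          simp only [if_true, eq_self_iff_true, if_pos]
          have harg : (f1 j' + t - f2 k - C1 j' k) / ε = t / ε + (f1 j' - f2 k - C1 j' k) / ε := by
            field_simp; ring
          rw [show f1 j' + t - f2 k - C1 j' k = f1 j' + t - f2 k - C1 j' k from rfl, harg,
            Real.exp_add]
          ring
        · simp [hc]
      have e3 : ∑ j', ∑ k, Real.exp ((f1 j' + (if j' = j then t else 0) - f2 k - C1 j' k) / ε)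
          = (∑ j', ∑ k, Real.exp ((f1 j' - f2 k - C1 j' k) / ε))
            + (Real.exp (t / ε) - 1) * (∑ k, x k) := by
        simp only [hx, e2, Finset.sum_add_distrib, ite_mul, zero_mul,
          Finset.sum_ite_irrel, Finset.sum_const_zero,
          Finset.sum_ite_eq', Finset.mem_univ, if_true, ← Finset.mul_sum]
      rw [e1, e3]
      ring
    rw [key] at h
    linarith
  -- Second marginal condition: b l = ∑ k, y k
  have hT : b l = ∑ k, y k := by
    apply perturb_eq ε (b l) (∑ k, y k) hε
    intro t
    have h := hopt f1 f2 (fun l' => f3 l' + if l' = l then t else 0)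
    have key : dual2 a b ε C1 C2 f1 f2 (fun l' => f3 l' + if l' = l then t else 0)
        = dual2 a b ε C1 C2 f1 f2 f3
          + (t * b l - ε * (Real.exp (t / ε) - 1) * (∑ k, y k)) := by
      simp only [dual2]
      have e1 : ∑ l', (f3 l' + if l' = l then t else 0) * b l'
          = (∑ l', f3 l' * b l') + t * b l := by
        simp [add_mul, Finset.sum_add_distrib, ite_mul]
      have e2 : ∀ k l', Real.exp ((f2 k + (f3 l' + if l' = l then t else 0) - C2 k l') / ε)
          = Real.exp ((f2 k + f3 l' - C2 k l') / ε)
            + (if l' = l then (Real.exp (t / ε) - 1) else 0)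
              * Real.exp ((f2 k + f3 l' - C2 k l') / ε) := by
        intro k l'
        by_cases hc : l' = l
        · subst hc
          simp only [if_true, eq_self_iff_true, if_pos]
          have harg : (f2 k + (f3 l' + t) - C2 k l') / ε = t / ε + (f2 k + f3 l' - C2 k l') / ε := by
            field_simp; ring
          rw [harg, Real.exp_add]
          ring
        · simp [hc]
      have e3 : ∑ k, ∑ l', Real.exp ((f2 k + (f3 l' + if l' = l then t else 0) - C2 k l') / ε)
          = (∑ k, ∑ l', Real.exp ((f2 k + f3 l' - C2 k l') / ε))
            + (Real.exp (t / ε) - 1) * (∑ k, y k) := by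
        simp only [hy, e2, Finset.sum_add_distrib, ite_mul, zero_mul,
          Finset.sum_ite_irrel, Finset.sum_const_zero,
          Finset.sum_ite_eq', Finset.mem_univ, if_true, ← Finset.mul_sum]
      rw [e1, e3]
      ring
    rw [key] at h
    linarith
  -- The product formula
  have hxy : ∀ k, uh1 j * K1 j k * (K2 k l * uh3 l) = x k * y k := by
    intro k
    simp only [hx, hy, hf1, hf2, hf3, hK1, hK2]
    rw [← Real.exp_add]
    have hu1 := hpos1 j; have hu2 := hpos2 k; have hu3 := hpos3 l
    have : (ε * Real.log (uh1 j) - ε * Real.log (uh2 k) - C1 j k) / ε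
        + (ε * Real.log (uh2 k) + ε * Real.log (uh3 l) - C2 k l) / ε
        = Real.log (uh1 j) + (-C1 j k / ε) + ((-C2 k l / ε) + Real.log (uh3 l)) := by
      field_simp; ring
    rw [this, Real.exp_add, Real.exp_add, Real.exp_add, Real.exp_log hu1, Real.exp_log hu3]
  have hxnn : ∀ k, 0 ≤ x k := fun k => (Real.exp_pos _).le
  have hynn : ∀ k, 0 ≤ y k := fun k => (Real.exp_pos _).le
  calc uh1 j * (∑ k, K1 j k * K2 k l) * uh3 l
      = ∑ k, x k * y k := by
        rw [Finset.mul_sum, Finset.sum_mul]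
        exact Finset.sum_congr rfl fun k _ => by rw [← hxy k]; ring
    _ ≤ ∑ k, x k * (∑ k', y k') := by
        apply Finset.sum_le_sum
        intro k _
        exact mul_le_mul_of_nonneg_left
          (Finset.single_le_sum (fun k' _ => hynn k') (Finset.mem_univ k)) (hxnn k)
    _ = (∑ k, x k) * (∑ k', y k') := by rw [← Finset.sum_mul]
    _ = a j * b l := by rw [← hS, ← hT]
    _ ≤ 1 * 1 := by
        apply mul_le_mul _ _ (hb l).le zero_le_one
        · rw [← hasum]; exact Finset.single_le_sum (fun i _ => (ha i).le) (Finset.mem_univ j)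
        · rw [← hbsum]; exact Finset.single_le_sum (fun i _ => (hb i).le) (Finset.mem_univ l)
    _ = 1 := by norm_num
end
end
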